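/- Fix a real α ≠ 0 and integer n ≥ 1, and let S_α(n,k) = (1/(α^k k!)) Σ_{j=0}^{k} (−1)^j binom(k,j)(−jα)_n. Then for every real θ: Σ_{k=1}^n (∏_{i=1}^{k−1}(θ + iα)) S_α(n,k) = (θ+1)_{n−1}, where (y)_m is the rising factorial and the empty product is 1. -/

import Mathlib

open Finset

/-- generalized Stirling number S_α(n,k) of Pitman -/
noncomputable def genStirling (α : ℝ) (n k : ℕ) : ℝ :=
  (1 / (α ^ k * (Nat.factorial k : ℝ))) *
    ∑ j ∈ Finset.range (k + 1),
      (-1 : ℝ) ^ j * (Nat.choose k j : ℝ) * ∏ i ∈ Finset.range n, (-(j : ℝ) * α + i)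

/-- sum shuffling for alternating binomial sums. -/
lemma alt_sum_succ (k : ℕ) (f : ℕ → ℝ) :
    ∑ j ∈ Finset.range (k + 2), (-1 : ℝ) ^ j * ((k+1).choose j : ℝ) * f j
      = ∑ j ∈ Finset.range (k + 1), (-1 : ℝ) ^ j * (k.choose j : ℝ) * (f j - f (j+1)) := by
  have hB : ∑ j ∈ Finset.range (k + 2), (-1 : ℝ) ^ j * (k.choose j : ℝ) * f j
      = ∑ j ∈ Finset.range (k + 1), (-1 : ℝ) ^ j * (k.choose j : ℝ) * f j := by
    rw [Finset.sum_range_succ]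
    simp [Nat.choose_eq_zero_of_lt (Nat.lt_succ_self k)]
  have hL : ∑ j ∈ Finset.range (k + 2), (-1 : ℝ) ^ j * ((k+1).choose j : ℝ) * f j
      = (∑ j ∈ Finset.range (k + 1), (-1 : ℝ) ^ (j+1) * (k.choose j : ℝ) * f (j+1))
        + ∑ j ∈ Finset.range (k + 2), (-1 : ℝ) ^ j * (k.choose j : ℝ) * f j := by
    rw [Finset.sum_range_succ' _ (k+1),
      Finset.sum_range_succ' (fun j => (-1 : ℝ) ^ j * (k.choose j : ℝ) * f j) (k+1)]
    have hc : ∀ j ∈ Finset.range (k+1),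
        (-1 : ℝ) ^ (j+1) * ((k+1).choose (j+1) : ℝ) * f (j+1)
        = (-1 : ℝ) ^ (j+1) * (k.choose j : ℝ) * f (j+1)
          + (-1 : ℝ) ^ (j+1) * (k.choose (j+1) : ℝ) * f (j+1) := by
      intro j _
      rw [Nat.choose_succ_succ]
      push_cast; ring
    rw [Finset.sum_congr rfl hc, Finset.sum_add_distrib]
    simp [Nat.choose_zero_right]
    try ring
  rw [hL, hB, ← Finset.sum_add_distrib]
  apply Finset.sum_congr rfl
  intro j _
  ring

open Polynomial in
/-- k-th finite difference of a polynomial of degree < k vanishes. -/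
lemma alt_sum_choose_poly_eval : ∀ (k : ℕ) (P : Polynomial ℝ), P.natDegree < k →
    ∑ j ∈ Finset.range (k + 1), (-1 : ℝ) ^ j * (Nat.choose k j : ℝ) * P.eval (j : ℝ) = 0 := by
  intro k
  induction k with
  | zero => intro P h; omega
  | succ k ih =>
    intro P h
    have key := alt_sum_succ k (fun j : ℕ => P.eval (j : ℝ))
    beta_reduce at key
    rw [show k + 1 + 1 = k + 2 from rfl, key]
    set Q : Polynomial ℝ := P - P.comp (X + 1) with hQdef
    have hevalQ : ∀ j : ℕ, P.eval (j : ℝ) - P.eval ((j + 1 : ℕ) : ℝ) = Q.eval (j : ℝ) := by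
      intro j
      simp [hQdef, eval_comp]
      try push_cast
      try ring
    have hsum : ∑ j ∈ Finset.range (k+1),
          (-1 : ℝ) ^ j * (k.choose j : ℝ) * (P.eval (j : ℝ) - P.eval ((j + 1 : ℕ) : ℝ))
        = ∑ j ∈ Finset.range (k+1), (-1 : ℝ) ^ j * (k.choose j : ℝ) * Q.eval (j : ℝ) :=
      Finset.sum_congr rfl fun j _ => by rw [hevalQ j]
    rw [hsum]
    by_cases hQ0 : Q = 0
    · simp [hQ0]
    · apply ih
      have hP0 : P ≠ 0 := by
        intro hp
        exact hQ0 (by simp [hQdef, hp])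
      have hdX : (X + 1 : Polynomial ℝ).natDegree = 1 := by
        rw [← Polynomial.C_1]
        exact natDegree_X_add_C (1 : ℝ)
      have hlc : (P.comp (X + 1)).leadingCoeff = P.leadingCoeff := by
        rw [leadingCoeff_comp (by rw [hdX]; norm_num)]
        have h1 : (X + 1 : Polynomial ℝ).leadingCoeff = 1 := by
          rw [← Polynomial.C_1]
          exact (monic_X_add_C (1 : ℝ))
        rw [h1, one_pow, mul_one]
      have hcomp0 : P.comp (X + 1) ≠ 0 := by
        intro hc
        apply hP0
        apply leadingCoeff_eq_zero.mp
        rw [← hlc, hc, leadingCoeff_zero]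
      have hdeg : (P.comp (X + 1)).degree = P.degree := by
        rw [degree_eq_natDegree hcomp0, degree_eq_natDegree hP0]
        norm_cast
        rw [natDegree_comp, hdX, mul_one]
      have hQdeg : Q.degree < P.degree := by
        have := degree_sub_lt hdeg hcomp0 hlc
        rw [hdeg] at this
        have hneg : Q = -(P.comp (X + 1) - P) := by rw [hQdef]; ring
        rw [hneg, degree_neg]
        exact this
      have hQnat : Q.natDegree < P.natDegree := natDegree_lt_natDegree hQ0 hQdeg
      omega

open Polynomial in
/-- S_α(n,k) = 0 for k > n. -/
lemma genStirling_eq_zero (α : ℝ) (n k : ℕ) (h : n < k) : genStirling α n k = 0 := by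
  unfold genStirling
  set P : Polynomial ℝ := ∏ i ∈ Finset.range n, (Polynomial.C (i : ℝ) - Polynomial.C α * X) with hP
  have heval : ∀ j : ℕ, (∏ i ∈ Finset.range n, (-(j : ℝ) * α + i)) = P.eval (j : ℝ) := by
    intro j
    rw [hP, eval_prod]
    exact Finset.prod_congr rfl (fun i _ => by simp; ring)
  have hdeg : P.natDegree ≤ n := by
    rw [hP]
    refine le_trans (natDegree_prod_le _ _) ?_
    calc ∑ i ∈ Finset.range n, (Polynomial.C (i : ℝ) - Polynomial.C α * X).natDegree
        ≤ ∑ _i ∈ Finset.range n, 1 := by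
          apply Finset.sum_le_sum
          intro i _
          refine le_trans (natDegree_sub_le _ _) ?_
          simp only [natDegree_C, max_le_iff]
          exact ⟨Nat.zero_le 1, le_trans (natDegree_C_mul_le _ _) (by simp)⟩
      _ = n := by simp
  have : ∑ j ∈ Finset.range (k + 1), (-1:ℝ)^j * (Nat.choose k j : ℝ)
      * ∏ i ∈ Finset.range n, (-(j : ℝ) * α + i) = 0 := by
    rw [Finset.sum_congr rfl (fun j _ => by rw [heval j])]
    exact alt_sum_choose_poly_eval k P (lt_of_le_of_lt hdeg h)
  rw [this, mul_zero]

/-- S_α(n,0) = 0 for n ≥ 1. -/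
lemma genStirling_zero (α : ℝ) (n : ℕ) (hn : 1 ≤ n) : genStirling α n 0 = 0 := by
  unfold genStirling
  obtain ⟨m, rfl⟩ := Nat.exists_eq_add_of_le hn
  simp
  exact Finset.prod_eq_zero (i := 0) (Finset.mem_range.mpr (by omega)) (by norm_num)

/-- recurrence: S_α(n+1, m+1) = S_α(n, m) + (n − (m+1)α) S_α(n, m+1). -/
lemma genStirling_rec (α : ℝ) (hα : α ≠ 0) (n m : ℕ) :
    genStirling α (n+1) (m+1)
      = genStirling α n m + ((n : ℝ) - (m+1) * α) * genStirling α n (m+1) := by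
  unfold genStirling
  have hfac : ((m+1).factorial : ℝ) = (m+1) * (m.factorial : ℝ) := by
    push_cast [Nat.factorial_succ]; ring
  have hfacpos : (m.factorial : ℝ) ≠ 0 := by positivity
  have hfacpos1 : ((m+1).factorial : ℝ) ≠ 0 := by positivity
  have hpow : (α : ℝ) ^ (m+1) ≠ 0 := pow_ne_zero _ hα
  have hpowm : (α : ℝ) ^ m ≠ 0 := pow_ne_zero _ hα
  -- key sum identity, multiplied through by α^(m+1) * (m+1)!
  have key : ∑ j ∈ Finset.range (m + 2), (-1:ℝ)^j * (Nat.choose (m+1) j : ℝ)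
        * ∏ i ∈ Finset.range (n+1), (-(j:ℝ) * α + i)
      = α * (m+1) * (∑ j ∈ Finset.range (m + 1), (-1:ℝ)^j * (Nat.choose m j : ℝ)
          * ∏ i ∈ Finset.range n, (-(j:ℝ) * α + i))
        + ((n:ℝ) - (m+1) * α) * (∑ j ∈ Finset.range (m + 2), (-1:ℝ)^j * (Nat.choose (m+1) j : ℝ)
          * ∏ i ∈ Finset.range n, (-(j:ℝ) * α + i)) := by
    have hext : ∑ j ∈ Finset.range (m + 1), (-1:ℝ)^j * (Nat.choose m j : ℝ)
          * ∏ i ∈ Finset.range n, (-(j:ℝ) * α + i)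
        = ∑ j ∈ Finset.range (m + 2), (-1:ℝ)^j * (Nat.choose m j : ℝ)
          * ∏ i ∈ Finset.range n, (-(j:ℝ) * α + i) := by
      rw [Finset.sum_range_succ _ (m+1)]
      simp [Nat.choose_eq_zero_of_lt (Nat.lt_succ_self m)]
    rw [hext, Finset.mul_sum, Finset.mul_sum, ← Finset.sum_add_distrib]
    apply Finset.sum_congr rfl
    intro j hj
    have hjle : j ≤ m + 1 := Nat.lt_succ_iff.mp (Finset.mem_range.mp hj)
    rw [Finset.prod_range_succ]
    -- need: (-1)^j C(m+1,j) r j (-jα + n) = α(m+1)(-1)^j C(m,j) r j + (n-(m+1)α)(-1)^j C(m+1,j) r j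
    have hnat : (Nat.choose m j : ℝ) * (m + 1) = (Nat.choose (m+1) j : ℝ) * ((m+1 : ℕ) - j : ℕ) := by
      exact_mod_cast congrArg (Nat.cast : ℕ → ℝ) (Nat.choose_mul_succ_eq m j)
    have hcast : (((m+1 : ℕ) - j : ℕ) : ℝ) = (m+1 : ℝ) - j := by
      push_cast [Nat.cast_sub hjle]; ring
    rw [hcast] at hnat
    have : (Nat.choose (m+1) j : ℝ) * (-(j:ℝ) * α + n)
        = α * (m+1) * (Nat.choose m j : ℝ) + ((n:ℝ) - (m+1) * α) * (Nat.choose (m+1) j : ℝ) := by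
      have expand : (Nat.choose (m+1) j : ℝ) * (-(j:ℝ) * α + n)
          = ((n:ℝ) - (m+1) * α) * (Nat.choose (m+1) j : ℝ)
            + α * ((Nat.choose (m+1) j : ℝ) * ((m+1 : ℝ) - j)) := by ring
      rw [expand, ← hnat]; ring
    linear_combination ((-1:ℝ)^j * ∏ i ∈ Finset.range n, (-(j:ℝ) * α + i)) * this
  -- now divide through
  have h1 : (1 / (α ^ (m+1) * ((m+1).factorial : ℝ))) * (α * (m+1)) = 1 / (α ^ m * (m.factorial : ℝ)) := by
    rw [hfac]
    field_simp
    ring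
  calc (1 / (α ^ (m+1) * ((m+1).factorial : ℝ))) *
        ∑ j ∈ Finset.range (m + 2), (-1:ℝ)^j * (Nat.choose (m+1) j : ℝ)
          * ∏ i ∈ Finset.range (n+1), (-(j:ℝ) * α + i)
      = (1 / (α ^ (m+1) * ((m+1).factorial : ℝ))) * (α * (m+1))
          * (∑ j ∈ Finset.range (m + 1), (-1:ℝ)^j * (Nat.choose m j : ℝ)
            * ∏ i ∈ Finset.range n, (-(j:ℝ) * α + i))
        + ((n:ℝ) - (m+1) * α) * ((1 / (α ^ (m+1) * ((m+1).factorial : ℝ))) *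
          (∑ j ∈ Finset.range (m + 2), (-1:ℝ)^j * (Nat.choose (m+1) j : ℝ)
            * ∏ i ∈ Finset.range n, (-(j:ℝ) * α + i))) := by
        rw [key]; ring
    _ = _ := by rw [h1]

/-- main identity, shifted form. -/
lemma main_aux (α : ℝ) (hα : α ≠ 0) (θ : ℝ) : ∀ n : ℕ,
    ∑ k ∈ Finset.range (n+1),
        (∏ i ∈ Finset.range k, (θ + (i + 1) * α)) * genStirling α (n+1) (k+1)
      = ∏ i ∈ Finset.range n, (θ + 1 + i) := by
  intro n
  induction n with
  | zero =>
    simp only [Finset.sum_range_one, Finset.prod_range_zero, one_mul]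
    unfold genStirling
    rw [Finset.sum_range_succ, Finset.sum_range_succ]
    simp
    field_simp
  | succ n ih =>
    have hrec : ∀ k, genStirling α (n+2) (k+1)
        = genStirling α (n+1) k + ((n+1 : ℝ) - (k+1) * α) * genStirling α (n+1) (k+1) := by
      intro k
      have := genStirling_rec α hα (n+1) k
      push_cast at this ⊢
      linarith
    have split : ∑ k ∈ Finset.range (n+2),
          (∏ i ∈ Finset.range k, (θ + (i + 1) * α)) * genStirling α (n+2) (k+1)
        = (∑ k ∈ Finset.range (n+2),
            (∏ i ∈ Finset.range k, (θ + (i + 1) * α)) * genStirling α (n+1) k)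
          + (∑ k ∈ Finset.range (n+2),
            (∏ i ∈ Finset.range k, (θ + (i + 1) * α)) * (((n:ℝ)+1) - ((k:ℝ)+1) * α)
              * genStirling α (n+1) (k+1)) := by
      rw [← Finset.sum_add_distrib]
      apply Finset.sum_congr rfl
      intro k _
      rw [hrec k]
      push_cast
      ring
    have T1 : ∑ k ∈ Finset.range (n+2),
          (∏ i ∈ Finset.range k, (θ + (i + 1) * α)) * genStirling α (n+1) k
        = ∑ k ∈ Finset.range (n+1),
            (∏ i ∈ Finset.range k, (θ + (i + 1) * α)) * (θ + ((k:ℝ)+1) * α)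
              * genStirling α (n+1) (k+1) := by
      rw [Finset.sum_range_succ' _ (n+1)]
      rw [genStirling_zero α (n+1) (by omega)]
      simp only [Finset.prod_range_zero, mul_zero, add_zero]
      apply Finset.sum_congr rfl
      intro k _
      rw [Finset.prod_range_succ]
      try push_cast
      try ring
    have T2 : ∑ k ∈ Finset.range (n+2),
          (∏ i ∈ Finset.range k, (θ + (i + 1) * α)) * (((n:ℝ)+1) - ((k:ℝ)+1) * α)
            * genStirling α (n+1) (k+1)
        = ∑ k ∈ Finset.range (n+1),
            (∏ i ∈ Finset.range k, (θ + (i + 1) * α)) * (((n:ℝ)+1) - ((k:ℝ)+1) * α)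
              * genStirling α (n+1) (k+1) := by
      rw [Finset.sum_range_succ]
      rw [genStirling_eq_zero α (n+1) (n+2) (by omega)]
      simp
    rw [split, T1, T2, ← Finset.sum_add_distrib]
    have combine : ∀ k ∈ Finset.range (n+1),
        (∏ i ∈ Finset.range k, (θ + (i + 1) * α)) * (θ + ((k:ℝ)+1) * α)
            * genStirling α (n+1) (k+1)
          + (∏ i ∈ Finset.range k, (θ + (i + 1) * α)) * (((n:ℝ)+1) - ((k:ℝ)+1) * α)
            * genStirling α (n+1) (k+1)
        = (θ + (n:ℝ) + 1) * ((∏ i ∈ Finset.range k, (θ + (i + 1) * α))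
            * genStirling α (n+1) (k+1)) := by
      intro k _; ring
    rw [Finset.sum_congr rfl combine, ← Finset.mul_sum, ih, Finset.prod_range_succ]
    push_cast
    ring

/-- Σ_{k=1}^n (∏_{i=1}^{k−1}(θ+iα)) S_α(n,k) = (θ+1)_{n−1}
(the PD(α,θ) block-count pmf sums to one). -/
theorem genStirling_block_count_normalization
    (α : ℝ) (hα : α ≠ 0) (n : ℕ) (hn : 1 ≤ n) (θ : ℝ) :
    ∑ k ∈ Finset.Icc 1 n,
        (∏ i ∈ Finset.range (k - 1), (θ + (i + 1) * α)) * genStirling α n k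
      = ∏ i ∈ Finset.range (n - 1), (θ + 1 + i) := by
  obtain ⟨m, rfl⟩ := Nat.exists_eq_add_of_le hn
  have hIcc : Finset.Icc 1 (1 + m) = Finset.Ico 1 (1 + m + 1) := by
    rw [Finset.Ico_add_one_right_eq_Icc]
  rw [hIcc, Finset.sum_Ico_eq_sum_range]
  have hrange : 1 + m + 1 - 1 = m + 1 := by omega
  rw [hrange]
  have := main_aux α hα θ m
  have heq : ∑ k ∈ Finset.range (m+1),
      (∏ i ∈ Finset.range (1 + k - 1), (θ + (i + 1) * α)) * genStirling α (1 + m) (1 + k)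
    = ∑ k ∈ Finset.range (m+1),
      (∏ i ∈ Finset.range k, (θ + (i + 1) * α)) * genStirling α (m+1) (k+1) := by
    apply Finset.sum_congr rfl
    intro k _
    rw [show 1 + k - 1 = k from by omega, show 1 + m = m + 1 from by omega,
      show 1 + k = k + 1 from by omega]
  rw [heq, this, show 1 + m - 1 = m from by omega]
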